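/- arXiv:1905.04907 — 3 statements merged into one kernel-verified Lean document; each statement's English description precedes it below -/
import Mathlib

section
/- For real numbers a < b, the double integral over [a,b]×[a,b] of (2λs + 2ab − (a+b)(λ+s)) / √((λ−a)(b−λ)(s−a)(b−s)) dλ ds equals −π²(b−a)²/2. -/
open MeasureTheory Set

namespace SineKernelAux

variable {a b : ℝ}

noncomputable def c (a b : ℝ) : ℝ := (a + b) / 2
noncomputable def r (a b : ℝ) : ℝ := (b - a) / 2
noncomputable def f (a b : ℝ) (θ : ℝ) : ℝ := c a b + r a b * Real.sin θ

lemma r_pos (hab : a < b) : 0 < r a b := by simp [r]; linarith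

lemma hasDeriv (θ : ℝ) : HasDerivAt (f a b) (r a b * Real.cos θ) θ := by
  exact ((Real.hasDerivAt_sin θ).const_mul (r a b)).const_add (c a b)

lemma injOn (hab : a < b) : InjOn (f a b) (Ioo (-(Real.pi/2)) (Real.pi/2)) := by
  have hr := r_pos hab
  have : StrictMonoOn (f a b) (Ioo (-(Real.pi/2)) (Real.pi/2)) := by
    intro x hx y hy hxy
    have := Real.strictMonoOn_sin (Ioo_subset_Icc_self hx) (Ioo_subset_Icc_self hy) hxy
    unfold f; nlinarith
  exact this.injOn

lemma image_eq (hab : a < b) : f a b '' Ioo (-(Real.pi/2)) (Real.pi/2) = Ioo a b := by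
  have hr := r_pos hab
  have hr2 : r a b ≠ 0 := ne_of_gt hr
  ext x
  constructor
  · rintro ⟨θ, hθ, rfl⟩
    have h1 : Real.sin θ < Real.sin (Real.pi/2) :=
      Real.strictMonoOn_sin (Ioo_subset_Icc_self hθ) (by constructor <;> simp [Real.pi_pos.le, le_refl] <;> linarith [Real.pi_pos]) hθ.2
    have h2 : Real.sin (-(Real.pi/2)) < Real.sin θ :=
      Real.strictMonoOn_sin (by constructor <;> simp [Real.pi_pos.le, le_refl] <;> linarith [Real.pi_pos]) (Ioo_subset_Icc_self hθ) hθ.1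
    rw [Real.sin_pi_div_two] at h1
    rw [Real.sin_neg, Real.sin_pi_div_two] at h2
    constructor <;> (unfold f c r at *; nlinarith)
  · intro hx
    refine ⟨Real.arcsin ((x - c a b) / r a b), ⟨?_, ?_⟩, ?_⟩
    · rw [Real.neg_pi_div_two_lt_arcsin, lt_div_iff₀ hr]
      unfold c r at *; nlinarith [hx.1]
    · rw [Real.arcsin_lt_pi_div_two, div_lt_one hr]
      unfold c r at *; nlinarith [hx.2]
    · rw [f, Real.sin_arcsin]
      · field_simp; ring
      · rw [le_div_iff₀ hr]; unfold c r at *; nlinarith [hx.1]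
      · rw [div_le_one hr]; unfold c r at *; nlinarith [hx.2]

lemma sqrt_eq (hab : a < b) {θ : ℝ} (hθ : θ ∈ Ioo (-(Real.pi/2)) (Real.pi/2)) :
    Real.sqrt ((f a b θ - a) * (b - f a b θ)) = r a b * Real.cos θ := by
  have hr := r_pos hab
  have hcos : 0 < Real.cos θ := Real.cos_pos_of_mem_Ioo hθ
  have h : (f a b θ - a) * (b - f a b θ) = (r a b * Real.cos θ)^2 := by
    have hpy := Real.sin_sq_add_cos_sq θ
    unfold f c r; linear_combination (-(((b - a)/2)^2)) * hpy
  rw [h, Real.sqrt_sq (by positivity)]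

lemma abs_eq {θ : ℝ} (hab : a < b) (hθ : θ ∈ Ioo (-(Real.pi/2)) (Real.pi/2)) :
    |r a b * Real.cos θ| = r a b * Real.cos θ := by
  have hr := r_pos hab
  have hcos : 0 < Real.cos θ := Real.cos_pos_of_mem_Ioo hθ
  exact abs_of_pos (by positivity)

lemma measurableIoo : MeasurableSet (Ioo (-(Real.pi/2)) (Real.pi/2)) := measurableSet_Ioo

lemma substitution (hab : a < b) (g : ℝ → ℝ) :
    ∫ x in Ioo a b, g x =
      ∫ θ in Ioo (-(Real.pi/2)) (Real.pi/2), |r a b * Real.cos θ| • g (f a b θ) := by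
  rw [← image_eq hab]
  exact integral_image_eq_integral_abs_deriv_smul measurableIoo
    (fun θ _ => (hasDeriv θ).hasDerivWithinAt) (injOn hab) g

lemma integrableOn_subst (hab : a < b) (g : ℝ → ℝ) :
    IntegrableOn g (Ioo a b) ↔
      IntegrableOn (fun θ => |r a b * Real.cos θ| • g (f a b θ))
        (Ioo (-(Real.pi/2)) (Real.pi/2)) := by
  rw [← image_eq hab]
  exact integrableOn_image_iff_integrableOn_abs_deriv_smul measurableIoo
    (fun θ _ => (hasDeriv θ).hasDerivWithinAt) (injOn hab) g

noncomputable def H (a b : ℝ) (x : ℝ) : ℝ := 1 / Real.sqrt ((x - a) * (b - x))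
noncomputable def G (a b : ℝ) (x : ℝ) : ℝ := (x - c a b) / Real.sqrt ((x - a) * (b - x))

lemma H_subst (hab : a < b) {θ : ℝ} (hθ : θ ∈ Ioo (-(Real.pi/2)) (Real.pi/2)) :
    |r a b * Real.cos θ| • H a b (f a b θ) = 1 := by
  have hr := r_pos hab
  have hcos : 0 < Real.cos θ := Real.cos_pos_of_mem_Ioo hθ
  rw [abs_eq hab hθ, H, sqrt_eq hab hθ, smul_eq_mul]
  field_simp

lemma G_subst (hab : a < b) {θ : ℝ} (hθ : θ ∈ Ioo (-(Real.pi/2)) (Real.pi/2)) :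
    |r a b * Real.cos θ| • G a b (f a b θ) = r a b * Real.sin θ := by
  have hr := r_pos hab
  have hcos : 0 < Real.cos θ := Real.cos_pos_of_mem_Ioo hθ
  rw [abs_eq hab hθ, G, sqrt_eq hab hθ, smul_eq_mul]
  have : f a b θ - c a b = r a b * Real.sin θ := by unfold f; ring
  rw [this]
  field_simp

lemma integral_H (hab : a < b) : ∫ x in Ioo a b, H a b x = Real.pi := by
  rw [substitution hab, setIntegral_congr_fun measurableIoo (fun θ hθ => H_subst hab hθ)]
  simp only [integral_const, measureReal_def, Measure.restrict_apply, MeasurableSet.univ, univ_inter,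
    Real.volume_Ioo, smul_eq_mul, mul_one]
  rw [show Real.pi/2 - -(Real.pi/2) = Real.pi by ring,
    ENNReal.toReal_ofReal Real.pi_pos.le]

lemma integral_G (hab : a < b) : ∫ x in Ioo a b, G a b x = 0 := by
  rw [substitution hab, setIntegral_congr_fun measurableIoo (fun θ hθ => G_subst hab hθ)]
  have h1 : ∫ θ in Ioo (-(Real.pi/2)) (Real.pi/2), r a b * Real.sin θ =
      ∫ θ in (-(Real.pi/2))..(Real.pi/2), r a b * Real.sin θ := by
    rw [intervalIntegral.integral_of_le (by linarith [Real.pi_pos]),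
      ← MeasureTheory.integral_Ioc_eq_integral_Ioo]
  rw [h1, intervalIntegral.integral_const_mul, integral_sin]
  simp

lemma integrable_H (hab : a < b) : IntegrableOn (H a b) (Ioo a b) := by
  rw [integrableOn_subst hab]
  exact (integrableOn_const (by simp [Real.volume_Ioo])).congr_fun
    (fun θ hθ => (H_subst hab hθ).symm) measurableIoo

lemma integrable_G (hab : a < b) : IntegrableOn (G a b) (Ioo a b) := by
  rw [integrableOn_subst hab]
  have : IntegrableOn (fun θ => r a b * Real.sin θ) (Ioo (-(Real.pi/2)) (Real.pi/2)) :=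
    (((continuous_const.mul Real.continuous_sin).continuousOn.integrableOn_Icc).mono_set Ioo_subset_Icc_self)
  exact this.congr_fun (fun θ hθ => (G_subst hab hθ).symm) measurableIoo

end SineKernelAux

theorem double_integral_sine_kernel (a b : ℝ) (hab : a < b) :
    ∫ q in Ioo a b ×ˢ Ioo a b,
        (2 * q.1 * q.2 + 2 * a * b - (a + b) * (q.1 + q.2)) /
          Real.sqrt ((q.1 - a) * (b - q.1) * (q.2 - a) * (b - q.2))
      = - Real.pi ^ 2 * (b - a) ^ 2 / 2 := by
  open SineKernelAux in
  have key : ∀ q ∈ Ioo a b ×ˢ Ioo a b,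
      (2 * q.1 * q.2 + 2 * a * b - (a + b) * (q.1 + q.2)) /
          Real.sqrt ((q.1 - a) * (b - q.1) * (q.2 - a) * (b - q.2))
        = 2 * (G a b q.1 * G a b q.2) - (b - a)^2 / 2 * (H a b q.1 * H a b q.2) := by
    rintro ⟨x, y⟩ ⟨hx, hy⟩
    have hP : 0 < (x - a) * (b - x) := mul_pos (by linarith [hx.1]) (by linarith [hx.2])
    have hQ : 0 < (y - a) * (b - y) := mul_pos (by linarith [hy.1]) (by linarith [hy.2])
    have hsP : 0 < Real.sqrt ((x - a) * (b - x)) := Real.sqrt_pos.mpr hP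
    have hsQ : 0 < Real.sqrt ((y - a) * (b - y)) := Real.sqrt_pos.mpr hQ
    have hsplit : Real.sqrt ((x - a) * (b - x) * (y - a) * (b - y))
        = Real.sqrt ((x - a) * (b - x)) * Real.sqrt ((y - a) * (b - y)) := by
      rw [show (x - a) * (b - x) * (y - a) * (b - y)
          = ((x - a) * (b - x)) * ((y - a) * (b - y)) by ring,
        Real.sqrt_mul hP.le]
    simp only [G, H, hsplit]
    have hnum : 2 * x * y + 2 * a * b - (a + b) * (x + y)
        = 2 * ((x - c a b) * (y - c a b)) - (b - a)^2 / 2 := by unfold c; ring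
    rw [hnum]
    field_simp
  rw [setIntegral_congr_fun (measurableSet_Ioo.prod measurableSet_Ioo) key]
  have hprod : (volume : Measure (ℝ × ℝ)).restrict (Ioo a b ×ˢ Ioo a b)
      = ((volume : Measure ℝ).restrict (Ioo a b)).prod ((volume : Measure ℝ).restrict (Ioo a b)) := by
    rw [Measure.volume_eq_prod, Measure.prod_restrict]
  rw [hprod]
  have hG : Integrable (fun q : ℝ × ℝ => G a b q.1 * G a b q.2)
      (((volume : Measure ℝ).restrict (Ioo a b)).prod ((volume : Measure ℝ).restrict (Ioo a b))) :=
    (integrable_G hab).mul_prod (integrable_G hab)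
  have hH : Integrable (fun q : ℝ × ℝ => H a b q.1 * H a b q.2)
      (((volume : Measure ℝ).restrict (Ioo a b)).prod ((volume : Measure ℝ).restrict (Ioo a b))) :=
    (integrable_H hab).mul_prod (integrable_H hab)
  rw [integral_sub (hG.const_mul 2) (hH.const_mul ((b - a)^2 / 2)),
    integral_const_mul, integral_const_mul, integral_prod_mul, integral_prod_mul,
    integral_G hab, integral_H hab]
  ring
end

section
/- Let a < b be reals and p continuously differentiable on [a,b] with p′ > 0 on [a,b]. For λ ∈ (a,b), define h₋(λ) − h₊(λ) = √(λ−a)·√(b−λ) · ∫_a^b (p(λ)−p(s))/(π(λ−s)) · ds/√((s−a)(b−s)). Then h₋(λ) − h₊(λ) > 0 and moreover h₋(λ) − h₊(λ) ≥ √((λ−a)(b−λ)) · inf_{[a,b]} p′. -/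
open MeasureTheory Set


lemma wmeas (a b : ℝ) : Measurable fun s : ℝ => (Real.sqrt ((s - a) * (b - s)))⁻¹ :=
  (Real.continuous_sqrt.comp (by continuity)).measurable.inv

lemma integ_left (a c b : ℝ) (hac : a ≤ c) (hcb : c < b) :
    IntervalIntegrable (fun s => (Real.sqrt ((s - a) * (b - s)))⁻¹) volume a c := by
  have h0 : IntervalIntegrable (fun x : ℝ => x ^ (-(1:ℝ)/2)) volume 0 (c - a) :=
    intervalIntegral.intervalIntegrable_rpow' (by norm_num)
  have h1 := (h0.comp_sub_right a)
  simp only [zero_add, sub_add_cancel] at h1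
  have hmaj : IntervalIntegrable (fun s => (Real.sqrt (b - c))⁻¹ * (s - a) ^ (-(1:ℝ)/2)) volume a c :=
    h1.const_mul _
  refine hmaj.mono_fun' ((wmeas a b).aestronglyMeasurable) ?_
  rw [Filter.EventuallyLE, ae_restrict_iff' measurableSet_uIoc]
  refine Filter.Eventually.of_forall (fun s hs => ?_)
  rw [uIoc_of_le hac] at hs
  have hsa : 0 < s - a := by simp [sub_pos]; exact hs.1
  have hbs : 0 < b - s := by simp [sub_pos]; exact lt_of_le_of_lt hs.2 hcb
  have hbc : 0 < b - c := by linarith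
  rw [Real.norm_eq_abs, abs_of_nonneg (by positivity)]
  rw [Real.sqrt_mul hsa.le, mul_inv]
  rw [show (-(1:ℝ)/2) = -(1/2) by norm_num, Real.rpow_neg hsa.le,
    ← Real.sqrt_eq_rpow]
  rw [mul_comm ((Real.sqrt (b-c))⁻¹) _]
  have h2 : Real.sqrt (b - c) ≤ Real.sqrt (b - s) := Real.sqrt_le_sqrt (by linarith [hs.2])
  exact mul_le_mul_of_nonneg_left (inv_anti₀ (by positivity) h2) (by positivity)

lemma integ_right (a c b : ℝ) (hac : a < c) (hcb : c ≤ b) :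
    IntervalIntegrable (fun s => (Real.sqrt ((s - a) * (b - s)))⁻¹) volume c b := by
  have h0 : IntervalIntegrable (fun x : ℝ => x ^ (-(1:ℝ)/2)) volume 0 (b - c) :=
    intervalIntegral.intervalIntegrable_rpow' (by norm_num)
  have h1 := (h0.comp_sub_left b)
  simp only [sub_zero, sub_sub_cancel] at h1
  have hmaj : IntervalIntegrable (fun s => (Real.sqrt (c - a))⁻¹ * (b - s) ^ (-(1:ℝ)/2)) volume c b :=
    (h1.const_mul _).symm
  refine hmaj.mono_fun' ((wmeas a b).aestronglyMeasurable) ?_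
  rw [Filter.EventuallyLE, ae_restrict_iff' measurableSet_uIoc]
  refine Filter.Eventually.of_forall (fun s hs => ?_)
  rw [uIoc_of_le hcb] at hs
  have hsa : 0 < s - a := by have := hs.1; simp [sub_pos]; linarith
  have hbs : 0 ≤ b - s := by linarith [hs.2]
  have hca : 0 < c - a := by linarith
  rw [Real.norm_eq_abs, abs_of_nonneg (by positivity)]
  rw [Real.sqrt_mul hsa.le, mul_inv]
  rw [show (-(1:ℝ)/2) = -(1/2) by norm_num, Real.rpow_neg hbs,
    ← Real.sqrt_eq_rpow]
  have h2 : Real.sqrt (c - a) ≤ Real.sqrt (s - a) := Real.sqrt_le_sqrt (by linarith [hs.1])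
  exact mul_le_mul_of_nonneg_right (inv_anti₀ (by positivity) h2) (by positivity)

lemma integ_w (a b : ℝ) (hab : a < b) :
    IntervalIntegrable (fun s => (Real.sqrt ((s - a) * (b - s)))⁻¹) volume a b := by
  have hm : a < (a + b) / 2 := by linarith
  have hm' : (a + b) / 2 < b := by linarith
  exact (integ_left a _ b hm.le hm').trans (integ_right a _ b hm hm'.le)


lemma wval (a b : ℝ) (hab : a < b)
    (hint : IntervalIntegrable (fun s => (Real.sqrt ((s - a) * (b - s)))⁻¹) volume a b) :
    ∫ s in a..b, (Real.sqrt ((s - a) * (b - s)))⁻¹ = Real.pi := by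
  have hba : (0:ℝ) < b - a := by linarith
  set G : ℝ → ℝ := fun s => Real.arcsin ((2 * s - (a + b)) / (b - a)) with hG
  have hcont : ContinuousOn G (Icc a b) :=
    (Real.continuous_arcsin.comp (by continuity)).continuousOn
  have hderiv : ∀ s ∈ Ioo a b, HasDerivAt G ((Real.sqrt ((s - a) * (b - s)))⁻¹) s := by
    intro s hs
    set u : ℝ := (2 * s - (a + b)) / (b - a) with hu
    have hu1 : -1 < u := by rw [hu, lt_div_iff₀ hba]; nlinarith [hs.1]
    have hu2 : u < 1 := by rw [hu, div_lt_iff₀ hba]; nlinarith [hs.2]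
    have hL : HasDerivAt (fun s : ℝ => (2 * s - (a + b)) / (b - a)) (2 / (b - a)) s := by
      simpa using (((hasDerivAt_id s).const_mul 2).sub_const (a + b)).div_const (b - a)
    have hA := (Real.hasDerivAt_arcsin (ne_of_gt hu1) (ne_of_lt hu2)).comp s hL
    refine hA.congr_deriv (Eq.symm ?_)
    have hsa : (0:ℝ) < s - a := by linarith [hs.1]
    have hbs : (0:ℝ) < b - s := by linarith [hs.2]
    have key : 1 - u ^ 2 = 4 * ((s - a) * (b - s)) / (b - a) ^ 2 := by
      rw [hu, div_pow]; field_simp; ring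
    have hsq : Real.sqrt (1 - u ^ 2) = 2 * Real.sqrt ((s - a) * (b - s)) / (b - a) := by
      rw [key, show (4 : ℝ) * ((s - a) * (b - s)) / (b - a) ^ 2
          = (2 / (b - a)) ^ 2 * ((s - a) * (b - s)) by field_simp; ring,
        Real.sqrt_mul (by positivity), Real.sqrt_sq (by positivity)]
      ring
    rw [hsq]
    have hx : Real.sqrt ((s - a) * (b - s)) ≠ 0 := by positivity
    field_simp
  have := intervalIntegral.integral_eq_sub_of_hasDerivAt_of_le hab.le hcont hderiv hint
  rw [this, hG]
  have h1 : (2 * b - (a + b)) / (b - a) = 1 := by field_simp; ring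
  have h2 : (2 * a - (a + b)) / (b - a) = -1 := by field_simp; ring
  simp only [h1, h2, Real.arcsin_one, Real.arcsin_neg_one]
  ring

theorem h_jump_positive_and_lower_bound (a b : ℝ) (hab : a < b) (p : ℝ → ℝ)
    (hp : ContDiffOn ℝ 1 p (Icc a b))
    (hp' : ∀ s ∈ Icc a b, 0 < derivWithin p (Icc a b) s)
    (lam : ℝ) (hlam : lam ∈ Ioo a b) :
    0 < Real.sqrt (lam - a) * Real.sqrt (b - lam) *
        ∫ s in Ioo a b,
          (if s = lam then derivWithin p (Icc a b) lam else (p lam - p s) / (lam - s)) /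
            (Real.pi * Real.sqrt ((s - a) * (b - s)))
    ∧ Real.sqrt ((lam - a) * (b - lam)) * sInf (derivWithin p (Icc a b) '' Icc a b) ≤
        Real.sqrt (lam - a) * Real.sqrt (b - lam) *
          ∫ s in Ioo a b,
            (if s = lam then derivWithin p (Icc a b) lam else (p lam - p s) / (lam - s)) /
              (Real.pi * Real.sqrt ((s - a) * (b - s))) := by
  have hpi := Real.pi_pos
  set D := derivWithin p (Icc a b) with hD
  set m := sInf (D '' Icc a b) with hm
  set M := sSup (D '' Icc a b) with hM
  have hlam' : lam ∈ Icc a b := Ioo_subset_Icc_self hlam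
  have hDc : ContinuousOn D (Icc a b) :=
    hp.continuousOn_derivWithin (uniqueDiffOn_Icc hab) le_rfl
  have hKcomp : IsCompact (D '' Icc a b) := isCompact_Icc.image_of_continuousOn hDc
  have hKne : (D '' Icc a b).Nonempty := (nonempty_Icc.2 hab.le).image D
  have hm_pos : 0 < m := by
    obtain ⟨c, hc, hceq⟩ := hKcomp.sInf_mem hKne
    rw [hm, ← hceq]; exact hp' c hc
  have hm_le : ∀ s ∈ Icc a b, m ≤ D s := fun s hs =>
    csInf_le hKcomp.bddBelow (mem_image_of_mem D hs)
  have hM_ge : ∀ s ∈ Icc a b, D s ≤ M := fun s hs =>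
    le_csSup hKcomp.bddAbove (mem_image_of_mem D hs)
  -- the slope function takes values of D
  have hdiffat : ∀ x ∈ Ioo a b, DifferentiableAt ℝ p x := fun x hx =>
    (hp.differentiableOn one_ne_zero x (Ioo_subset_Icc_self hx)).differentiableAt
      (Icc_mem_nhds hx.1 hx.2)
  have key : ∀ s ∈ Icc a b, s ≠ lam → ∃ c ∈ Icc a b, (p lam - p s) / (lam - s) = D c := by
    intro s hs hne
    rcases lt_or_gt_of_ne hne with hlt | hgt
    · obtain ⟨c, hc, hceq⟩ := exists_deriv_eq_slope p hlt
        (hp.continuousOn.mono (Icc_subset_Icc hs.1 hlam'.2))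
        (fun x hx => (hdiffat x ⟨lt_of_le_of_lt hs.1 hx.1, lt_of_lt_of_le hx.2 hlam'.2⟩).differentiableWithinAt)
      have hcmem : c ∈ Ioo a b := ⟨lt_of_le_of_lt hs.1 hc.1, lt_of_lt_of_le hc.2 hlam'.2⟩
      refine ⟨c, Ioo_subset_Icc_self hcmem, ?_⟩
      rw [hD, derivWithin_of_mem_nhds (Icc_mem_nhds hcmem.1 hcmem.2), ← hceq]
    · obtain ⟨c, hc, hceq⟩ := exists_deriv_eq_slope p hgt
        (hp.continuousOn.mono (Icc_subset_Icc hlam'.1 hs.2))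
        (fun x hx => (hdiffat x ⟨lt_of_le_of_lt hlam'.1 hx.1, lt_of_lt_of_le hx.2 hs.2⟩).differentiableWithinAt)
      have hcmem : c ∈ Ioo a b := ⟨lt_of_le_of_lt hlam'.1 hc.1, lt_of_lt_of_le hc.2 hs.2⟩
      refine ⟨c, Ioo_subset_Icc_self hcmem, ?_⟩
      rw [hD, derivWithin_of_mem_nhds (Icc_mem_nhds hcmem.1 hcmem.2), hceq,
        ← neg_sub (p lam) (p s), ← neg_sub lam s, neg_div_neg_eq]
  -- the weight
  set w : ℝ → ℝ := fun s => (Real.pi * Real.sqrt ((s - a) * (b - s)))⁻¹ with hw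
  have hw_eq : w = fun s => Real.pi⁻¹ * (Real.sqrt ((s - a) * (b - s)))⁻¹ := by
    funext s; simp only [hw, mul_inv]
  have hw_nonneg : ∀ s, 0 ≤ w s := fun s => by rw [hw]; positivity
  have hw_int : IntegrableOn w (Ioo a b) := by
    rw [hw_eq]
    have h2 : IntegrableOn (fun s => Real.pi⁻¹ * (Real.sqrt ((s - a) * (b - s)))⁻¹)
        (Ioc a b) volume :=
      ((intervalIntegrable_iff_integrableOn_Ioc_of_le hab.le).1 (integ_w a b hab)).const_mul _
    exact h2.mono_set Ioo_subset_Ioc_self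
  have hw_val : ∫ s in Ioo a b, w s = 1 := by
    rw [hw_eq, ← integral_Ioc_eq_integral_Ioo, ← intervalIntegral.integral_of_le hab.le,
      intervalIntegral.integral_const_mul, wval a b hab (integ_w a b hab),
      inv_mul_cancel₀ (ne_of_gt hpi)]
  -- the a.e. simplification
  set g0 : ℝ → ℝ := fun s => (p lam - p s) / (lam - s) * w s with hg0
  have hne_ae : ∀ᵐ s ∂(volume.restrict (Ioo a b)), s ≠ lam := by
    refine ae_iff.2 ?_
    have : {s : ℝ | ¬ s ≠ lam} = {lam} := by ext s; simp
    rw [this]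
    exact measure_mono_null (fun x hx => hx) (by simp [Measure.restrict_apply])
  have hmem_ae : ∀ᵐ s ∂(volume.restrict (Ioo a b)), s ∈ Ioo a b :=
    ae_restrict_mem measurableSet_Ioo
  have hg0_bounds : ∀ s ∈ Ioo a b, s ≠ lam → m * w s ≤ g0 s ∧ g0 s ≤ M * w s := by
    intro s hs hne
    obtain ⟨c, hc, hceq⟩ := key s (Ioo_subset_Icc_self hs) hne
    rw [hg0]; dsimp only; rw [hceq]
    exact ⟨mul_le_mul_of_nonneg_right (hm_le c hc) (hw_nonneg s),
      mul_le_mul_of_nonneg_right (hM_ge c hc) (hw_nonneg s)⟩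
  have hg0_meas : AEStronglyMeasurable g0 (volume.restrict (Ioo a b)) := by
    have hpm : AEMeasurable p (volume.restrict (Ioo a b)) :=
      ContinuousOn.aemeasurable (hp.continuousOn.mono Ioo_subset_Icc_self) measurableSet_Ioo
    have hwm : Measurable w := by
      rw [hw]
      exact (measurable_const.mul
        ((Real.continuous_sqrt.comp (by continuity)).measurable)).inv
    exact (((aemeasurable_const.sub hpm).div
      ((measurable_const.sub measurable_id).aemeasurable)).mul
      hwm.aemeasurable).aestronglyMeasurable
  have hg0_int : IntegrableOn g0 (Ioo a b) := by
    refine Integrable.mono' (hw_int.const_mul M) hg0_meas ?_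
    filter_upwards [hne_ae, hmem_ae] with s hne hs
    have hb := hg0_bounds s hs hne
    have h0 : 0 ≤ g0 s := le_trans (by positivity) hb.1
    rw [Real.norm_eq_abs, abs_of_nonneg h0]
    exact hb.2
  have hIval : m ≤ ∫ s in Ioo a b, g0 s := by
    have h1 : ∫ s in Ioo a b, m * w s ≤ ∫ s in Ioo a b, g0 s := by
      refine integral_mono_ae (hw_int.const_mul m) hg0_int ?_
      filter_upwards [hne_ae, hmem_ae] with s hne hs
      exact (hg0_bounds s hs hne).1
    rwa [integral_const_mul, hw_val, mul_one] at h1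
  have hcongr : ∫ s in Ioo a b,
      (if s = lam then D lam else (p lam - p s) / (lam - s)) /
        (Real.pi * Real.sqrt ((s - a) * (b - s))) = ∫ s in Ioo a b, g0 s := by
    refine integral_congr_ae ?_
    filter_upwards [hne_ae] with s hne
    rw [if_neg hne, hg0, div_eq_mul_inv]
  have hfac : Real.sqrt ((lam - a) * (b - lam)) = Real.sqrt (lam - a) * Real.sqrt (b - lam) :=
    Real.sqrt_mul (by linarith [hlam.1]) _
  have hfac_pos : 0 < Real.sqrt (lam - a) * Real.sqrt (b - lam) := by
    have h1 : 0 < lam - a := by linarith [hlam.1]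
    have h2 : 0 < b - lam := by linarith [hlam.2]
    positivity
  rw [hcongr]
  constructor
  · exact mul_pos hfac_pos (lt_of_lt_of_le hm_pos hIval)
  · rw [hfac]
    exact mul_le_mul_of_nonneg_left hIval hfac_pos.le
end

section
/- For 0 < α < π, the function r(z) = (1 + i√(z²−1)sin(α/2))/(1 + iz tan(α/2)) is holomorphic and non-vanishing on ℂ \ ([−1,1] ∪ {i cot(α/2)}), and r(z) → cos(α/2) as z → ∞. -/
open Set Filter Complex Bornology

set_option maxHeartbeats 1000000 in

theorem r_function_holomorphic_nonvanishing (α : ℝ) (hα1 : 0 < α) (hα2 : α < Real.pi)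
    (s : ℂ → ℂ)
    (hs : DifferentiableOn ℂ s ((fun x : ℝ => (x : ℂ)) '' Icc (-1 : ℝ) 1)ᶜ)
    (hs2 : ∀ z ∈ ((fun x : ℝ => (x : ℂ)) '' Icc (-1 : ℝ) 1)ᶜ, s z ^ 2 = z ^ 2 - 1)
    (hsnorm : Tendsto (fun x : ℝ => s x / x) atTop (nhds 1))
    (r : ℂ → ℂ)
    (hr : ∀ z, r z =
      (1 + Complex.I * s z * (Real.sin (α / 2) : ℂ)) /
        (1 + Complex.I * z * (Real.tan (α / 2) : ℂ))) :
    DifferentiableOn ℂ r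
        ((fun x : ℝ => (x : ℂ)) '' Icc (-1 : ℝ) 1 ∪
          {Complex.I * ((Real.cos (α / 2) / Real.sin (α / 2) : ℝ) : ℂ)})ᶜ ∧
    (∀ z ∈ ((fun x : ℝ => (x : ℂ)) '' Icc (-1 : ℝ) 1 ∪
          {Complex.I * ((Real.cos (α / 2) / Real.sin (α / 2) : ℝ) : ℂ)})ᶜ, r z ≠ 0) ∧
    Tendsto r (cobounded ℂ) (nhds ((Real.cos (α / 2) : ℂ))) := by
  have pi_pos := Real.pi_pos
  set m := Real.sin (α / 2) with hmdef
  set cc := Real.cos (α / 2) with hccdef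
  set t := Real.tan (α / 2) with htdef
  set c := cc / m with hcdef
  set K : Set ℂ := (fun x : ℝ => (x : ℂ)) '' Icc (-1 : ℝ) 1 with hKdef
  have hm : 0 < m := Real.sin_pos_of_pos_of_lt_pi (by linarith) (by linarith)
  have hcc : 0 < cc := Real.cos_pos_of_mem_Ioo ⟨by linarith, by linarith⟩
  have ht : t = m / cc := Real.tan_eq_sin_div_cos _
  have ht0 : 0 < t := by rw [ht]; positivity
  have hc0 : 0 < c := by rw [hcdef]; positivity
  have hmC : (m : ℂ) ≠ 0 := ofReal_ne_zero.mpr hm.ne'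
  have hccC : (cc : ℂ) ≠ 0 := ofReal_ne_zero.mpr hcc.ne'
  have htC : (t : ℂ) ≠ 0 := ofReal_ne_zero.mpr ht0.ne'
  have hcC : (c : ℂ) ≠ 0 := ofReal_ne_zero.mpr hc0.ne'
  have htmc : (t : ℂ) = (m : ℂ) / (cc : ℂ) := by rw [ht]; push_cast; ring
  -- membership in K
  have hKmem : ∀ z : ℂ, z ∈ K ↔ z.im = 0 ∧ -1 ≤ z.re ∧ z.re ≤ 1 := by
    intro z
    constructor
    · rintro ⟨x, hx, rfl⟩
      simpa using hx
    · rintro ⟨h0, h1, h2⟩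
      exact ⟨z.re, ⟨h1, h2⟩, Complex.ext rfl (by simpa using h0.symm)⟩
  have hKclosed : IsClosed K := (isCompact_Icc.image Complex.continuous_ofReal).isClosed
  have hKopen : IsOpen Kᶜ := hKclosed.isOpen_compl
  have hK0 : ∀ z : ℂ, z ∉ K → z ≠ 0 := by
    intro z hz h
    exact hz (by rw [hKmem, h]; norm_num)
  -- slit plane condition
  have hslit : ∀ z : ℂ, z ∉ K → (1 - 1 / z ^ 2) ∈ Complex.slitPlane := by
    intro z hz
    by_contra hns
    rw [Complex.mem_slitPlane_iff] at hns
    push_neg at hns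
    obtain ⟨hre, him⟩ := hns
    have hz0 : z ≠ 0 := hK0 z hz
    set u : ℝ := (1 - 1 / z ^ 2).re with hu
    have hu0 : u ≤ 0 := hre
    have hw : (1 : ℂ) - 1 / z ^ 2 = (u : ℂ) := Complex.ext rfl (by simpa using him)
    have h1 : (1 : ℂ) / z ^ 2 = ((1 - u : ℝ) : ℂ) := by push_cast; linear_combination -hw
    have hz2ne : z ^ 2 ≠ 0 := pow_ne_zero _ hz0
    have hune : (1 - u : ℝ) ≠ 0 := by nlinarith
    have huneC : ((1 - u : ℝ) : ℂ) ≠ 0 := ofReal_ne_zero.mpr hune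
    have hz2 : z ^ 2 = ((1 / (1 - u) : ℝ) : ℂ) := by
      field_simp at h1
      push_cast
      rw [eq_div_iff (by exact_mod_cast huneC)]
      push_cast at h1
      linear_combination -h1
    have hzim : z.re * z.im + z.im * z.re = 0 := by
      have h := congrArg Complex.im hz2
      rw [Complex.ofReal_im, pow_two, Complex.mul_im] at h
      exact h
    have hzre : z.re * z.re - z.im * z.im = 1 / (1 - u) := by
      have h := congrArg Complex.re hz2
      rw [Complex.ofReal_re, pow_two, Complex.mul_re] at h
      exact h
    have hvpos : 0 < 1 / (1 - u) := by
      have : 0 < 1 - u := by linarith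
      positivity
    have hvle : 1 / (1 - u) ≤ 1 := by
      rw [div_le_one (by linarith)]; linarith
    rcases mul_eq_zero.mp (by linarith : z.re * z.im = 0) with h | h
    · nlinarith
    · exact hz ((hKmem z).mpr ⟨h, by nlinarith, by nlinarith⟩)
  have hslitne : ∀ z : ℂ, z ∉ K → (1 - 1 / z ^ 2) ≠ 0 :=
    fun z hz => slitPlane_ne_zero (hslit z hz)
  -- the explicit branch
  set σ : ℂ → ℂ := fun z => z * (1 - 1 / z ^ 2) ^ ((1 : ℂ) / 2) with hσdef
  have hσdiff : ∀ z : ℂ, z ∉ K → DifferentiableAt ℂ σ z := by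
    intro z hz
    have hz0 : z ≠ 0 := hK0 z hz
    have hd1 : DifferentiableAt ℂ (fun z : ℂ => 1 - 1 / z ^ 2) z := by
      apply DifferentiableAt.sub (differentiableAt_const _)
      exact DifferentiableAt.div (differentiableAt_const _) (differentiableAt_pow 2)
        (pow_ne_zero 2 hz0)
    exact DifferentiableAt.mul differentiableAt_id
      (hd1.cpow (differentiableAt_const _) (hslit z hz))
  have hσsq : ∀ z : ℂ, z ∉ K → σ z ^ 2 = z ^ 2 - 1 := by
    intro z hz
    have hz0 : z ≠ 0 := hK0 z hz
    have h1 : ((1 - 1 / z ^ 2) ^ ((1 : ℂ) / 2)) ^ 2 = 1 - 1 / z ^ 2 := by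
      rw [sq, ← Complex.cpow_add _ _ (hslitne z hz)]
      norm_num
    rw [hσdef]
    simp only [mul_pow, h1]
    field_simp
  have hσne : ∀ z : ℂ, z ∉ K → σ z ≠ 0 := by
    intro z hz h
    have h2 := hσsq z hz
    rw [h, zero_pow two_ne_zero] at h2
    have : z ^ 2 = 1 := by linear_combination -h2
    have h3 : (z - 1) * (z + 1) = 0 := by linear_combination this
    rcases mul_eq_zero.mp h3 with h4 | h4
    · exact hz (by rw [hKmem, sub_eq_zero.mp h4]; norm_num)
    · exact hz (by rw [hKmem, eq_neg_of_add_eq_zero_left h4]; norm_num)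
  -- the connected open set U
  set A : Set ℂ := {z : ℂ | z.im < 0} with hAdef
  set B : Set ℂ := {z : ℂ | 1 < z.re} with hBdef
  set C : Set ℂ := {z : ℂ | 0 < z.im} with hCdef
  set D : Set ℂ := {z : ℂ | z.re < -1} with hDdef
  set U : Set ℂ := A ∪ B ∪ C ∪ D with hUdef
  have hUopen : IsOpen U := by
    apply IsOpen.union
    apply IsOpen.union
    apply IsOpen.union
    · exact isOpen_lt Complex.continuous_im continuous_const
    · exact isOpen_lt continuous_const Complex.continuous_re
    · exact isOpen_lt continuous_const Complex.continuous_im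
    · exact isOpen_lt Complex.continuous_re continuous_const
  have hUpre : IsPreconnected U := by
    have hA : IsPreconnected A := (convex_halfSpace_im_lt 0).isPreconnected
    have hB : IsPreconnected B := (convex_halfSpace_re_gt 1).isPreconnected
    have hC : IsPreconnected C := (convex_halfSpace_im_gt 0).isPreconnected
    have hD : IsPreconnected D := (convex_halfSpace_re_lt (-1)).isPreconnected
    have hAB : IsPreconnected (A ∪ B) := by
      apply IsPreconnected.union (2 - Complex.I) _ _ hA hB
      · show (2 - Complex.I).im < 0; simp
      · show 1 < (2 - Complex.I).re; norm_num
    have hABC : IsPreconnected (A ∪ B ∪ C) := by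
      apply IsPreconnected.union (2 + Complex.I) _ _ hAB hC
      · right; show 1 < (2 + Complex.I).re; norm_num
      · show 0 < (2 + Complex.I).im; simp
    apply IsPreconnected.union (-2 - Complex.I) _ _ hABC hD
    · left; left; show (-2 - Complex.I).im < 0; simp
    · show (-2 - Complex.I).re < -1; norm_num
  have hUK : U ⊆ Kᶜ := by
    intro z hz hzK
    rw [hKmem] at hzK
    obtain ⟨h0, h1, h2⟩ := hzK
    rcases hz with ((h | h) | h) | h
    · rw [hAdef] at h; simp only [mem_setOf_eq] at h; linarith
    · rw [hBdef] at h; simp only [mem_setOf_eq] at h; linarith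
    · rw [hCdef] at h; simp only [mem_setOf_eq] at h; linarith
    · rw [hDdef] at h; simp only [mem_setOf_eq] at h; linarith
  have hUnorm : ∀ z : ℂ, 1 < ‖z‖ → z ∈ U := by
    intro z hz
    rcases lt_trichotomy z.im 0 with h | h | h
    · exact Or.inl (Or.inl (Or.inl h))
    · have habs : ‖z‖ ^ 2 = z.re * z.re + z.im * z.im := by
        rw [Complex.sq_norm, Complex.normSq_apply]
      rw [h] at habs
      have h1 : 1 < z.re * z.re := by nlinarith [norm_nonneg z]
      rcases lt_or_ge z.re 0 with hr | hr
      · exact Or.inr (show z.re < -1 by nlinarith)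
      · exact Or.inl (Or.inl (Or.inr (show 1 < z.re by nlinarith)))
    · exact Or.inl (Or.inr h)
  -- asymptotics of σ on the real axis
  have hxK : ∀ x : ℝ, 1 < x → ((x : ℂ)) ∉ K := by
    intro x hx h
    rw [hKmem] at h
    simp only [Complex.ofReal_re] at h
    linarith [h.2.2]
  have hone : (1 : ℂ) ∈ Complex.slitPlane := by
    rw [Complex.mem_slitPlane_iff]; norm_num
  have hcpowcont : ContinuousAt (fun w : ℂ => w ^ ((1 : ℂ) / 2)) 1 :=
    continuousAt_cpow_const hone
  have hσtend : Tendsto (fun x : ℝ => σ x / x) atTop (nhds 1) := by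
    have hbase : Tendsto (fun x : ℝ => 1 - 1 / (x : ℂ) ^ 2) atTop (nhds 1) := by
      have h3 : Tendsto (fun x : ℝ => 1 / x ^ 2) atTop (nhds 0) := by
        refine ((tendsto_pow_atTop (two_ne_zero : (2:ℕ) ≠ 0)).inv_tendsto_atTop).congr fun x => ?_
        simp [one_div]
      have h2 : Tendsto (fun x : ℝ => 1 - 1 / x ^ 2) atTop (nhds 1) := by
        simpa using tendsto_const_nhds.sub h3
      have h4 : Tendsto (fun x : ℝ => ((1 - 1 / x ^ 2 : ℝ) : ℂ)) atTop
          (nhds (((1 : ℝ) : ℂ))) := (Complex.continuous_ofReal.tendsto _).comp h2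
      rw [Complex.ofReal_one] at h4
      exact h4.congr fun x => by push_cast; ring
    have hmain : Tendsto (fun x : ℝ => (1 - 1 / (x : ℂ) ^ 2) ^ ((1 : ℂ) / 2)) atTop
        (nhds 1) := by
      have h5 := hcpowcont.tendsto.comp hbase
      simpa [Function.comp_def] using h5
    apply Filter.Tendsto.congr' _ hmain
    filter_upwards [eventually_gt_atTop (1 : ℝ)] with x hx
    have hx0 : (x : ℂ) ≠ 0 := Complex.ofReal_ne_zero.mpr (by linarith)
    exact (mul_div_cancel_left₀ _ hx0).symm
  have hx2ne : ∀ x : ℝ, 1 < x → σ (x : ℂ) ≠ 0 := fun x hx => hσne _ (hxK x hx)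
  have heq : ∀ᶠ x : ℝ in atTop, s x = σ x := by
    have hq : Tendsto (fun x : ℝ => s x / σ x) atTop (nhds 1) := by
      have h1 := hsnorm.div hσtend one_ne_zero
      rw [div_one] at h1
      apply h1.congr'
      filter_upwards [eventually_gt_atTop (1 : ℝ)] with x hx
      have hx0 : (x : ℂ) ≠ 0 := by
        simpa using (by linarith : x ≠ 0)
      have := hx2ne x hx
      simp only [Pi.div_apply]
      field_simp
    filter_upwards [eventually_gt_atTop (1 : ℝ),
      hq.eventually (Metric.ball_mem_nhds (1 : ℂ) one_pos)] with x hx1 hx2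
    have hσx := hx2ne x hx1
    have hK' : ((x : ℝ) : ℂ) ∉ K := hxK x hx1
    have hsq : (s x - σ x) * (s x + σ x) = 0 := by
      have h1 := hs2 _ hK'
      have h2 := hσsq _ hK'
      linear_combination h1 - h2
    rcases mul_eq_zero.mp hsq with h | h
    · exact sub_eq_zero.mp h
    · exfalso
      have hneg : s (x : ℂ) = -σ (x : ℂ) := eq_neg_of_add_eq_zero_left h
      rw [hneg, neg_div, div_self hσx] at hx2
      have hx2' : dist (-1 : ℂ) 1 < 1 := hx2
      rw [dist_eq_norm] at hx2'
      norm_num at hx2'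
  -- identity theorem: s = σ on U
  obtain ⟨x₀, hx₀⟩ := eventually_atTop.mp heq
  set x₁ : ℝ := max x₀ 2 with hx₁def
  have hx₁ : ∀ x : ℝ, x₁ ≤ x → s x = σ x := fun x hx =>
    hx₀ x (le_trans (le_max_left _ _) hx)
  have hx₁2 : (2 : ℝ) ≤ x₁ := le_max_right _ _
  have hz₀U : ((x₁ : ℝ) : ℂ) ∈ U := by
    apply Or.inl (Or.inl (Or.inr _))
    show 1 < ((x₁ : ℝ) : ℂ).re
    rw [Complex.ofReal_re]
    linarith
  have hfreq : ∃ᶠ z in nhdsWithin ((x₁ : ℝ) : ℂ) {((x₁ : ℝ) : ℂ)}ᶜ, s z = σ z := by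
    have htend : Tendsto (fun n : ℕ => ((x₁ + 1 / (n + 1) : ℝ) : ℂ)) atTop
        (nhdsWithin ((x₁ : ℝ) : ℂ) {((x₁ : ℝ) : ℂ)}ᶜ) := by
      apply tendsto_nhdsWithin_of_tendsto_nhds_of_eventually_within
      · have h6 : Tendsto (fun n : ℕ => x₁ + 1 / (n + 1) : ℕ → ℝ) atTop (nhds x₁) := by
          simpa using (tendsto_const_nhds : Tendsto (fun _ : ℕ => x₁) atTop (nhds x₁)).add tendsto_one_div_add_atTop_nhds_zero_nat
        exact (Complex.continuous_ofReal.tendsto x₁).comp h6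
      · apply Eventually.of_forall
        intro n
        simp only [mem_compl_iff, mem_singleton_iff]
        intro h
        have h7 := Complex.ofReal_injective h
        have hn : (0 : ℝ) < 1 / (n + 1) := by positivity
        linarith
    exact htend.frequently (Frequently.of_forall fun n =>
      hx₁ (x₁ + 1 / (n + 1)) (le_add_of_nonneg_right (by positivity)))
  have hσdiffOn : DifferentiableOn ℂ σ Kᶜ := fun z hz =>
    (hσdiff z hz).differentiableWithinAt
  have hsan : AnalyticOnNhd ℂ s Kᶜ := hs.analyticOnNhd hKopen
  have hσan : AnalyticOnNhd ℂ σ Kᶜ := hσdiffOn.analyticOnNhd hKopen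
  have hsU : EqOn s σ U :=
    AnalyticOnNhd.eqOn_of_preconnected_of_frequently_eq (fun z hz => hsan z (hUK hz))
      (fun z hz => hσan z (hUK hz)) hUpre hz₀U hfreq
  -- the denominator vanishes only at I * c
  have hden : ∀ z : ℂ, z ≠ Complex.I * (c : ℂ) → 1 + Complex.I * z * (t : ℂ) ≠ 0 := by
    intro z hz h
    apply hz
    have hcC' : (c : ℂ) = (cc : ℂ) / (m : ℂ) := by rw [hcdef]; push_cast; ring
    have hvan : 1 + Complex.I * (Complex.I * (c : ℂ)) * (t : ℂ) = 0 := by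
      rw [htmc, hcC']
      field_simp
      linear_combination Complex.I_sq
    have h3 : Complex.I * (t : ℂ) * (z - Complex.I * (c : ℂ)) = 0 := by
      linear_combination h - hvan
    rcases mul_eq_zero.mp h3 with h4 | h4
    · exact absurd h4 (mul_ne_zero Complex.I_ne_zero htC)
    · exact sub_eq_zero.mp h4
  refine ⟨?_, ?_, ?_⟩
  · -- differentiability
    intro z hz
    simp only [compl_union, mem_inter_iff, mem_compl_iff, mem_singleton_iff] at hz
    obtain ⟨hzK, hzc⟩ := hz
    apply DifferentiableAt.differentiableWithinAt
    have hsz : DifferentiableAt ℂ s z := hs.differentiableAt (hKopen.mem_nhds hzK)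
    have hnum : DifferentiableAt ℂ (fun z => 1 + Complex.I * s z * (m : ℂ)) z := by
      apply DifferentiableAt.add (differentiableAt_const _)
      exact ((differentiableAt_const _).mul hsz).mul (differentiableAt_const _)
    have hdend : DifferentiableAt ℂ (fun z : ℂ => 1 + Complex.I * z * (t : ℂ)) z := by
      apply DifferentiableAt.add (differentiableAt_const _)
      exact ((differentiableAt_const _).mul differentiableAt_id).mul (differentiableAt_const _)
    have hrd : DifferentiableAt ℂ
        (fun z => (1 + Complex.I * s z * (m : ℂ)) / (1 + Complex.I * z * (t : ℂ))) z :=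
      hnum.div hdend (hden z hzc)
    apply hrd.congr_of_eventuallyEq
    exact Eventually.of_forall fun w => hr w
  · -- nonvanishing
    intro z hz
    simp only [compl_union, mem_inter_iff, mem_compl_iff, mem_singleton_iff] at hz
    obtain ⟨hzK, hzc⟩ := hz
    rw [hr z]
    apply div_ne_zero _ (hden z hzc)
    intro h
    -- from h : 1 + I * s z * m = 0 we get z² = -c²
    have hsz2 := hs2 z hzK
    have hz2 : z ^ 2 = -((c : ℂ)) ^ 2 := by
      have hsv : s z = Complex.I / (m : ℂ) := by
        rw [eq_div_iff hmC]
        linear_combination (-Complex.I) * h + s z * (m : ℂ) * Complex.I_sq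
      have h8 : s z ^ 2 = -1 / (m : ℂ) ^ 2 := by
        rw [hsv, div_pow, Complex.I_sq]
      have hpyth : (m : ℂ) ^ 2 + (cc : ℂ) ^ 2 = 1 := by
        have := Real.sin_sq_add_cos_sq (α / 2)
        push_cast [← hmdef, ← hccdef] at this ⊢
        exact_mod_cast this
      rw [hsz2] at h8
      have h8' : (z ^ 2 - 1) * (m : ℂ) ^ 2 = -1 := by
        rw [h8]
        exact div_mul_cancel₀ _ (pow_ne_zero 2 hmC)
      have hcC' : (c : ℂ) = (cc : ℂ) / (m : ℂ) := by rw [hcdef]; push_cast; ring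
      rw [hcC', div_pow, ← neg_div, eq_div_iff (pow_ne_zero 2 hmC)]
      linear_combination h8' + hpyth
    have hzz : z = -(Complex.I * (c : ℂ)) := by
      have h9 : (z - Complex.I * (c : ℂ)) * (z + Complex.I * (c : ℂ)) = 0 := by
        linear_combination hz2 - (c:ℂ)^2 * Complex.I_sq
      rcases mul_eq_zero.mp h9 with h10 | h10
      · exact absurd (sub_eq_zero.mp h10) hzc
      · linear_combination h10
    -- z is in the lower half plane, so s z = σ z
    have hzU : z ∈ U := by
      apply Or.inl (Or.inl (Or.inl _))
      show z.im < 0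
      rw [hzz]
      simp [hc0]
    have hsσ : s z = σ z := hsU hzU
    -- compute σ at -I*c
    have hzsq : (1 : ℂ) - 1 / z ^ 2 = (((1 + 1 / c ^ 2 : ℝ)) : ℂ) := by
      rw [hz2]
      push_cast
      field_simp
      ring
    set ρ : ℝ := (1 + 1 / c ^ 2) ^ ((1 : ℝ) / 2) with hρdef
    have hρpos : 0 < ρ := Real.rpow_pos_of_pos (by positivity) _
    have hcast : (((1 + 1 / c ^ 2 : ℝ)) : ℂ) ^ ((1 : ℂ) / 2) = (ρ : ℂ) := by
      rw [hρdef, Complex.ofReal_cpow (by positivity) ((1 : ℝ) / 2)]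
      norm_num
    have hσval : σ z = -(Complex.I * (c : ℂ)) * (ρ : ℂ) := by
      have hσz : σ z = z * ((1 : ℂ) - 1 / z ^ 2) ^ ((1 : ℂ) / 2) := rfl
      rw [hσz, hzsq, hcast, hzz]
    rw [hsσ, hσval] at h
    have hre : ((1 + c * ρ * m : ℝ) : ℂ) = 0 := by
      rw [← h]
      push_cast
      linear_combination ((c : ℂ) * (ρ : ℂ) * (m : ℂ)) * Complex.I_sq
    have hre' : (1 + c * ρ * m : ℝ) = 0 := by exact_mod_cast hre
    nlinarith [mul_pos (mul_pos hc0 hρpos) hm]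
  · -- the limit
    have h1z : Tendsto (fun z : ℂ => z⁻¹) (cobounded ℂ) (nhds 0) := tendsto_inv₀_cobounded
    have hw : Tendsto (fun z : ℂ => (1 - 1 / z ^ 2 : ℂ)) (cobounded ℂ) (nhds 1) := by
      have h2 : Tendsto (fun z : ℂ => 1 / z ^ 2) (cobounded ℂ) (nhds 0) := by
        have h3 := h1z.mul h1z
        rw [mul_zero] at h3
        exact h3.congr fun z => by rw [one_div, sq, mul_inv]
      simpa using tendsto_const_nhds.sub h2
    have hwc : Tendsto (fun z : ℂ => ((1 : ℂ) - 1 / z ^ 2) ^ ((1 : ℂ) / 2)) (cobounded ℂ)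
        (nhds 1) := by
      have h5 := hcpowcont.tendsto.comp hw
      simpa [Function.comp_def] using h5
    have hnum : Tendsto
        (fun z : ℂ => z⁻¹ + Complex.I * (((1 : ℂ) - 1 / z ^ 2) ^ ((1 : ℂ) / 2)) * (m : ℂ))
        (cobounded ℂ) (nhds (Complex.I * (m : ℂ))) := by
      have hIm : Tendsto (fun z : ℂ => Complex.I * (((1 : ℂ) - 1 / z ^ 2) ^ ((1 : ℂ) / 2)) * (m : ℂ))
          (cobounded ℂ) (nhds (Complex.I * 1 * (m : ℂ))) :=
        ((tendsto_const_nhds : Tendsto (fun _ : ℂ => Complex.I) _ _).mul hwc).mul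
          tendsto_const_nhds
      have h6 := h1z.add hIm
      simpa using h6
    have hdent : Tendsto (fun z : ℂ => z⁻¹ + Complex.I * (t : ℂ)) (cobounded ℂ)
        (nhds (Complex.I * (t : ℂ))) := by
      have h7 := h1z.add
        (tendsto_const_nhds : Tendsto (fun _ : ℂ => Complex.I * (t : ℂ)) _ _)
      simpa using h7
    have hlim := hnum.div hdent (mul_ne_zero Complex.I_ne_zero htC)
    have hval : Complex.I * (m : ℂ) / (Complex.I * (t : ℂ)) = (cc : ℂ) := by
      rw [htmc, mul_div_mul_left _ _ Complex.I_ne_zero]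
      field_simp
    rw [hval] at hlim
    apply Filter.Tendsto.congr' _ hlim
    filter_upwards [tendsto_norm_cobounded_atTop.eventually_gt_atTop 1] with z hz1
    have hz0 : z ≠ 0 := by
      intro hz
      rw [hz] at hz1
      norm_num at hz1
    have hzU : z ∈ U := hUnorm z hz1
    rw [hr z, hsU hzU]
    have hσz : σ z = z * ((1 : ℂ) - 1 / z ^ 2) ^ ((1 : ℂ) / 2) := rfl
    have e1 : z⁻¹ + Complex.I * (((1 : ℂ) - 1 / z ^ 2) ^ ((1 : ℂ) / 2)) * (m : ℂ)
        = z⁻¹ * (1 + Complex.I * σ z * (m : ℂ)) := by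
      rw [hσz]
      field_simp
    have e2 : z⁻¹ + Complex.I * (t : ℂ) = z⁻¹ * (1 + Complex.I * z * (t : ℂ)) := by
      field_simp
    simp only [Pi.div_apply]
    rw [e1, e2, mul_div_mul_left _ _ (inv_ne_zero hz0)]
end
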